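/- (First variation formula) Let L : I × ℝ⁴ → ℝ satisfy hypotheses (H1)–(H3), let y,h ∈ 𝒴¹, and set g(t,ε) := L{y+εh}(t) for ε ∈ (−ε̄, ε̄) for some ε̄ > 0. Assume: (i) g(t,·) is differentiable at 0 uniformly in t ∈ [a,b]_{q,ω}; (ii) ∫_{ω₀}^a g(t,ε) d_{q,ω}t and ∫_{ω₀}^b g(t,ε) d_{q,ω}t exist for all ε in a neighborhood of 0; (iii) ∫_{ω₀}^a ∂₂g(t,0) d_{q,ω}t and ∫_{ω₀}^b ∂₂g(t,0) d_{q,ω}t exist. Then the function ε ↦ ℒ[y+εh] is differentiable at 0 and its derivative at 0 equals ∫_a^b ( ∂₂L{y}(t)·h(qt+ω) + ∂₃L{y}(t)·D_{q,ω}[h](t) + ∂₄L{y}(t)·h(a) + ∂₅L{y}(t)·h(b) ) d_{q,ω}t. -/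

import Mathlib

noncomputable section

namespace Hahn

/-- The fixed point `ω₀ = ω/(1-q)` of `t ↦ qt+ω`. -/
def omega0 (q ω : ℝ) : ℝ := ω / (1 - q)

/-- The Hahn difference operator of `f` (viewed as a function on the interval `I`):
for `t ≠ ω₀` it is `(f(qt+ω) - f(t))/((q-1)t+ω)`, and at `ω₀` it is the derivative of `f`
at `ω₀` (within `I`). -/
def hahnD (q ω : ℝ) (I : Set ℝ) (f : ℝ → ℝ) (t : ℝ) : ℝ :=
  if t = omega0 q ω then derivWithin f I t
  else (f (q * t + ω) - f t) / ((q - 1) * t + ω)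

/-- `f` is `q,ω`-differentiable on `I`: the only nontrivial requirement is
differentiability at `ω₀` (for `t ≠ ω₀` the Hahn quotient always exists). -/
def HahnDiffOn (q ω : ℝ) (I : Set ℝ) (f : ℝ → ℝ) : Prop :=
  DifferentiableWithinAt ℝ f I (omega0 q ω)

/-- The `q`-bracket `[k]_q = (1-q^k)/(1-q)`. -/
def qnum (q : ℝ) (k : ℕ) : ℝ := (1 - q ^ k) / (1 - q)

/-- The `k`-th term of the Jackson–Nörlund series of `f` at `x`. -/
def jnTerm (q ω : ℝ) (f : ℝ → ℝ) (x : ℝ) (k : ℕ) : ℝ :=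
  q ^ k * f (q ^ k * x + ω * qnum q k)

/-- The Jackson–Nörlund series of `f` converges at `x`. -/
def JNSummable (q ω : ℝ) (f : ℝ → ℝ) (x : ℝ) : Prop :=
  Summable (jnTerm q ω f x)

/-- The Jackson–Nörlund integral `∫_{ω₀}^x f(t) d_{q,ω}t`. -/
def jnInt0 (q ω : ℝ) (f : ℝ → ℝ) (x : ℝ) : ℝ :=
  (x * (1 - q) - ω) * ∑' k : ℕ, jnTerm q ω f x k

/-- The Jackson–Nörlund integral `∫_a^b f(t) d_{q,ω}t`. -/
def jnInt (q ω : ℝ) (f : ℝ → ℝ) (a b : ℝ) : ℝ :=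
  jnInt0 q ω f b - jnInt0 q ω f a

/-- `f` is `q,ω`-integrable on `[a,b]`. -/
def JNIntegrable (q ω : ℝ) (f : ℝ → ℝ) (a b : ℝ) : Prop :=
  JNSummable q ω f a ∧ JNSummable q ω f b

/-- The set `[s]_{q,ω} = {q^n s + ω[n]_q : n ∈ ℕ} ∪ {ω₀}`. -/
def qwOrbit (q ω s : ℝ) : Set ℝ :=
  {x | ∃ n : ℕ, x = q ^ n * s + ω * qnum q n} ∪ {omega0 q ω}

/-- The `q,ω`-interval `[a,b]_{q,ω}`. -/
def qwInterval (q ω a b : ℝ) : Set ℝ :=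
  qwOrbit q ω a ∪ qwOrbit q ω b

/-- The class `𝒴⁰`: functions bounded on `[a,b]` and continuous at `ω₀`. -/
def Y0 (q ω : ℝ) (I : Set ℝ) (a b : ℝ) (y : ℝ → ℝ) : Prop :=
  (∃ M : ℝ, ∀ t ∈ Set.Icc a b, |y t| ≤ M) ∧ ContinuousWithinAt y I (omega0 q ω)

/-- The class `𝒴¹`: `y` is `q,ω`-differentiable, and `y`, `D_{q,ω}[y]` are bounded on
`[a,b]` and continuous at `ω₀`. -/
def Y1 (q ω : ℝ) (I : Set ℝ) (a b : ℝ) (y : ℝ → ℝ) : Prop :=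
  HahnDiffOn q ω I y ∧
  (∃ M : ℝ, ∀ t ∈ Set.Icc a b, |y t| ≤ M) ∧
  (∃ M : ℝ, ∀ t ∈ Set.Icc a b, |hahnD q ω I y t| ≤ M) ∧
  ContinuousWithinAt y I (omega0 q ω) ∧
  ContinuousWithinAt (hahnD q ω I y) I (omega0 q ω)

/-- The norm `‖y‖_{1,∞} = sup_{[a,b]}|y| + sup_{[a,b]}|D_{q,ω}[y]|`. -/
def norm1 (q ω : ℝ) (I : Set ℝ) (a b : ℝ) (y : ℝ → ℝ) : ℝ :=
  sSup ((fun t => |y t|) '' Set.Icc a b) +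
    sSup ((fun t => |hahnD q ω I y t|) '' Set.Icc a b)

/-- `∂₂L`: partial derivative of a Lagrangian `L(t,u₁,u₂,u₃,u₄)` in its 2nd argument. -/
def P2 (L : ℝ → ℝ → ℝ → ℝ → ℝ → ℝ) (t u1 u2 u3 u4 : ℝ) : ℝ :=
  deriv (fun u => L t u u2 u3 u4) u1

/-- `∂₃L`. -/
def P3 (L : ℝ → ℝ → ℝ → ℝ → ℝ → ℝ) (t u1 u2 u3 u4 : ℝ) : ℝ :=
  deriv (fun u => L t u1 u u3 u4) u2

/-- `∂₄L`. -/
def P4 (L : ℝ → ℝ → ℝ → ℝ → ℝ → ℝ) (t u1 u2 u3 u4 : ℝ) : ℝ :=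
  deriv (fun u => L t u1 u2 u u4) u3

/-- `∂₅L`. -/
def P5 (L : ℝ → ℝ → ℝ → ℝ → ℝ → ℝ) (t u1 u2 u3 u4 : ℝ) : ℝ :=
  deriv (fun u => L t u1 u2 u3 u) u4

/-- `L{y}(t) = L(t, y(qt+ω), D_{q,ω}[y](t), y(a), y(b))`. -/
def Lc (q ω : ℝ) (I : Set ℝ) (a b : ℝ) (L : ℝ → ℝ → ℝ → ℝ → ℝ → ℝ)
    (y : ℝ → ℝ) (t : ℝ) : ℝ :=
  L t (y (q * t + ω)) (hahnD q ω I y t) (y a) (y b)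

/-- `∂₂L{y}(t)`. -/
def P2c (q ω : ℝ) (I : Set ℝ) (a b : ℝ) (L : ℝ → ℝ → ℝ → ℝ → ℝ → ℝ)
    (y : ℝ → ℝ) (t : ℝ) : ℝ :=
  P2 L t (y (q * t + ω)) (hahnD q ω I y t) (y a) (y b)

/-- `∂₃L{y}(t)`. -/
def P3c (q ω : ℝ) (I : Set ℝ) (a b : ℝ) (L : ℝ → ℝ → ℝ → ℝ → ℝ → ℝ)
    (y : ℝ → ℝ) (t : ℝ) : ℝ :=
  P3 L t (y (q * t + ω)) (hahnD q ω I y t) (y a) (y b)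

/-- `∂₄L{y}(t)`. -/
def P4c (q ω : ℝ) (I : Set ℝ) (a b : ℝ) (L : ℝ → ℝ → ℝ → ℝ → ℝ → ℝ)
    (y : ℝ → ℝ) (t : ℝ) : ℝ :=
  P4 L t (y (q * t + ω)) (hahnD q ω I y t) (y a) (y b)

/-- `∂₅L{y}(t)`. -/
def P5c (q ω : ℝ) (I : Set ℝ) (a b : ℝ) (L : ℝ → ℝ → ℝ → ℝ → ℝ → ℝ)
    (y : ℝ → ℝ) (t : ℝ) : ℝ :=
  P5 L t (y (q * t + ω)) (hahnD q ω I y t) (y a) (y b)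

/-- The functional `ℒ[y] = ∫_a^b L{y}(t) d_{q,ω}t`. -/
def Lfun (q ω : ℝ) (I : Set ℝ) (a b : ℝ) (L : ℝ → ℝ → ℝ → ℝ → ℝ → ℝ)
    (y : ℝ → ℝ) : ℝ :=
  jnInt q ω (Lc q ω I a b L y) a b

/-- Hypothesis (H1): `(u₁,u₂,u₃,u₄) ↦ L(t,u₁,u₂,u₃,u₄)` is `C¹` for every `t ∈ I`. -/
def H1 (I : Set ℝ) (L : ℝ → ℝ → ℝ → ℝ → ℝ → ℝ) : Prop :=
  ∀ t ∈ I, ContDiff ℝ 1 (fun p : ℝ × ℝ × ℝ × ℝ => L t p.1 p.2.1 p.2.2.1 p.2.2.2)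

/-- Hypothesis (H2): `t ↦ L{y}(t)` is continuous at `ω₀` for every `y ∈ 𝒴¹`. -/
def H2 (q ω : ℝ) (I : Set ℝ) (a b : ℝ) (L : ℝ → ℝ → ℝ → ℝ → ℝ → ℝ) : Prop :=
  ∀ y : ℝ → ℝ, Y1 q ω I a b y → ContinuousWithinAt (Lc q ω I a b L y) I (omega0 q ω)

/-- Hypothesis (H3): `t ↦ ∂_{i+2}L{y}(t)` belongs to `𝒴¹` for `i = 0,1,2,3`. -/
def H3 (q ω : ℝ) (I : Set ℝ) (a b : ℝ) (L : ℝ → ℝ → ℝ → ℝ → ℝ → ℝ) : Prop :=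
  ∀ y : ℝ → ℝ, Y1 q ω I a b y →
    Y1 q ω I a b (P2c q ω I a b L y) ∧ Y1 q ω I a b (P3c q ω I a b L y) ∧
    Y1 q ω I a b (P4c q ω I a b L y) ∧ Y1 q ω I a b (P5c q ω I a b L y)

/-- `g(t,ε) = L{y+εh}(t)`, written out explicitly. -/
def gvar (q ω : ℝ) (I : Set ℝ) (a b : ℝ) (L : ℝ → ℝ → ℝ → ℝ → ℝ → ℝ)
    (y h : ℝ → ℝ) (t e : ℝ) : ℝ :=
  L t (y (q * t + ω) + e * h (q * t + ω)) (hahnD q ω I y t + e * hahnD q ω I h t)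
    (y a + e * h a) (y b + e * h b)

/-- Conditions (i)–(iii) of the first-variation lemma for a fixed pair `y, h`:
(i) `g(t,·)` is differentiable at `0` uniformly in `t ∈ [a,b]_{q,ω}`;
(ii) `∫_{ω₀}^a g(t,ε) d_{q,ω}t` and `∫_{ω₀}^b g(t,ε) d_{q,ω}t` exist for `ε` near `0`;
(iii) `∫_{ω₀}^a ∂₂g(t,0) d_{q,ω}t` and `∫_{ω₀}^b ∂₂g(t,0) d_{q,ω}t` exist. -/
def CondYH (q ω : ℝ) (I : Set ℝ) (a b : ℝ) (L : ℝ → ℝ → ℝ → ℝ → ℝ → ℝ)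
    (y h : ℝ → ℝ) : Prop :=
  ((∀ t ∈ qwInterval q ω a b, DifferentiableAt ℝ (fun e => gvar q ω I a b L y h t e) 0) ∧
    ∀ ep : ℝ, 0 < ep → ∃ δ : ℝ, 0 < δ ∧ ∀ e : ℝ, 0 < |e| → |e| < δ →
      ∀ t ∈ qwInterval q ω a b,
        |(gvar q ω I a b L y h t e - gvar q ω I a b L y h t 0) / e -
          deriv (fun e' => gvar q ω I a b L y h t e') 0| < ep) ∧
  (∃ r : ℝ, 0 < r ∧ ∀ e : ℝ, |e| < r →
    JNSummable q ω (fun t => gvar q ω I a b L y h t e) a ∧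
    JNSummable q ω (fun t => gvar q ω I a b L y h t e) b) ∧
  (JNSummable q ω (fun t => deriv (fun e => gvar q ω I a b L y h t e) 0) a ∧
    JNSummable q ω (fun t => deriv (fun e => gvar q ω I a b L y h t e) 0) b)

/-- Conditions (i)–(iii), quantified over all `y, h ∈ 𝒴¹`. -/
def Cond (q ω : ℝ) (I : Set ℝ) (a b : ℝ) (L : ℝ → ℝ → ℝ → ℝ → ℝ → ℝ) : Prop :=
  ∀ y h : ℝ → ℝ, Y1 q ω I a b y → Y1 q ω I a b h → CondYH q ω I a b L y h

/-- The Hahn quantum Euler–Lagrange equation for `L` along `y`, on `[a,b]_{q,ω}`. -/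
def EulerLagrange (q ω : ℝ) (I : Set ℝ) (a b : ℝ) (L : ℝ → ℝ → ℝ → ℝ → ℝ → ℝ)
    (y : ℝ → ℝ) : Prop :=
  ∀ t ∈ qwInterval q ω a b,
    P2c q ω I a b L y t - hahnD q ω I (fun τ => P3c q ω I a b L y τ) t = 0

/-- Natural boundary condition at `a`. -/
def NBCa (q ω : ℝ) (I : Set ℝ) (a b : ℝ) (L : ℝ → ℝ → ℝ → ℝ → ℝ → ℝ)
    (y : ℝ → ℝ) : Prop :=
  P3c q ω I a b L y a = jnInt q ω (P4c q ω I a b L y) a b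

/-- Natural boundary condition at `b`. -/
def NBCb (q ω : ℝ) (I : Set ℝ) (a b : ℝ) (L : ℝ → ℝ → ℝ → ℝ → ℝ → ℝ)
    (y : ℝ → ℝ) : Prop :=
  P3c q ω I a b L y b = - jnInt q ω (P5c q ω I a b L y) a b


/-! ### Auxiliary lemmas for the first variation formula -/

lemma uniqueDiff_at_omega0 (q ω : ℝ) {I : Set ℝ} (hI : I.OrdConnected)
    (hmem : omega0 q ω ∈ I) {a b : ℝ} (ha : a ∈ I) (hb : b ∈ I) (hab : a < b) :
    UniqueDiffWithinAt ℝ I (omega0 q ω) := by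
  set c := omega0 q ω with hc
  have hm : min a c ∈ I := by
    rcases le_total a c with hle | hle
    · rwa [min_eq_left hle]
    · rwa [min_eq_right hle]
  have hM : max b c ∈ I := by
    rcases le_total b c with hle | hle
    · rwa [max_eq_right hle]
    · rwa [max_eq_left hle]
  have hlt : min a c < max b c :=
    lt_of_le_of_lt (min_le_left a c) (lt_of_lt_of_le hab (le_max_left b c))
  have hcc : c ∈ Set.Icc (min a c) (max b c) := ⟨min_le_right a c, le_max_right b c⟩
  exact (uniqueDiffOn_Icc hlt c hcc).mono (hI.out hm hM)

lemma hahnD_add_mul (q ω : ℝ) (I : Set ℝ) (hud : UniqueDiffWithinAt ℝ I (omega0 q ω))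
    (y h : ℝ → ℝ) (hy : DifferentiableWithinAt ℝ y I (omega0 q ω))
    (hh : DifferentiableWithinAt ℝ h I (omega0 q ω)) (e t : ℝ) :
    hahnD q ω I (fun s => y s + e * h s) t = hahnD q ω I y t + e * hahnD q ω I h t := by
  unfold hahnD
  by_cases ht : t = omega0 q ω
  · subst ht
    simp only [if_pos rfl]
    have hder := (hy.hasDerivWithinAt.add
      (hh.hasDerivWithinAt.const_mul e)).derivWithin hud
    exact hder
  · simp only [if_neg ht]
    ring

lemma orbit_mem_I (q ω : ℝ) (hq : 0 < q) (hq1 : q < 1) {I : Set ℝ} (hI : I.OrdConnected)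
    (hmem : omega0 q ω ∈ I) {x : ℝ} (hx : x ∈ I) (k : ℕ) :
    q ^ k * x + ω * qnum q k ∈ I := by
  have hconv : Convex ℝ I := hI.convex
  have h1q : (1 : ℝ) - q ≠ 0 := by intro hcon; nlinarith
  have hrw : q ^ k * x + ω * qnum q k = q ^ k • x + (1 - q ^ k) • omega0 q ω := by
    unfold qnum omega0
    simp only [smul_eq_mul]
    field_simp
  rw [hrw]
  have hqk0 : (0 : ℝ) ≤ q ^ k := (pow_pos hq k).le
  have hqk1 : q ^ k ≤ 1 := pow_le_one₀ hq.le hq1.le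
  exact hconv hx hmem hqk0 (by linarith) (by ring)

lemma chain_rule_aux (L : ℝ → ℝ → ℝ → ℝ → ℝ → ℝ) (t : ℝ)
    (hC : ContDiff ℝ 1 (fun p : ℝ × ℝ × ℝ × ℝ => L t p.1 p.2.1 p.2.2.1 p.2.2.2))
    (u1 u2 u3 u4 v1 v2 v3 v4 : ℝ) :
    HasDerivAt (fun e => L t (u1 + e * v1) (u2 + e * v2) (u3 + e * v3) (u4 + e * v4))
      (P2 L t u1 u2 u3 u4 * v1 + P3 L t u1 u2 u3 u4 * v2 +
        P4 L t u1 u2 u3 u4 * v3 + P5 L t u1 u2 u3 u4 * v4) 0 := by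
  set G : ℝ × ℝ × ℝ × ℝ → ℝ := fun p => L t p.1 p.2.1 p.2.2.1 p.2.2.2 with hGdef
  have hdG : Differentiable ℝ G := hC.differentiable one_ne_zero
  set p₀ : ℝ × ℝ × ℝ × ℝ := (u1, u2, u3, u4) with hp₀
  have hF : HasFDerivAt G (fderiv ℝ G p₀) p₀ := (hdG p₀).hasFDerivAt
  have key : ∀ w1 w2 w3 w4 : ℝ,
      HasDerivAt (fun e : ℝ => G (u1 + e * w1, u2 + e * w2, u3 + e * w3, u4 + e * w4))
        (fderiv ℝ G p₀ (w1, w2, w3, w4)) 0 := by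
    intro w1 w2 w3 w4
    have h1 : ∀ u w : ℝ, HasDerivAt (fun e : ℝ => u + e * w) w 0 := by
      intro u w
      simpa using ((hasDerivAt_id (0 : ℝ)).mul_const w).const_add u
    have hc : HasDerivAt
        (fun e : ℝ => ((u1 + e * w1, u2 + e * w2, u3 + e * w3, u4 + e * w4) : ℝ × ℝ × ℝ × ℝ))
        ((w1, w2, w3, w4) : ℝ × ℝ × ℝ × ℝ) 0 :=
      (h1 u1 w1).prodMk ((h1 u2 w2).prodMk ((h1 u3 w3).prodMk (h1 u4 w4)))
    have h0 : ((u1 + (0:ℝ) * w1, u2 + (0:ℝ) * w2, u3 + (0:ℝ) * w3, u4 + (0:ℝ) * w4)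
        : ℝ × ℝ × ℝ × ℝ) = p₀ := by simp [hp₀]
    have hF' : HasFDerivAt G (fderiv ℝ G p₀)
        ((fun e : ℝ => ((u1 + e * w1, u2 + e * w2, u3 + e * w3, u4 + e * w4)
          : ℝ × ℝ × ℝ × ℝ)) 0) := by
      simpa [h0] using hF
    exact hF'.comp_hasDerivAt 0 hc
  have hp2 : P2 L t u1 u2 u3 u4 = fderiv ℝ G p₀ (1, 0, 0, 0) := by
    have hc : HasDerivAt (fun u : ℝ => ((u, u2, u3, u4) : ℝ × ℝ × ℝ × ℝ))
        ((1, 0, 0, 0) : ℝ × ℝ × ℝ × ℝ) u1 :=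
      (hasDerivAt_id u1).prodMk ((hasDerivAt_const u1 _).prodMk
        ((hasDerivAt_const u1 _).prodMk (hasDerivAt_const u1 _)))
    have hder := (hF.comp_hasDerivAt u1 hc).deriv
    rw [← hder, hGdef]
    rfl
  have hp3 : P3 L t u1 u2 u3 u4 = fderiv ℝ G p₀ (0, 1, 0, 0) := by
    have hc : HasDerivAt (fun u : ℝ => ((u1, u, u3, u4) : ℝ × ℝ × ℝ × ℝ))
        ((0, 1, 0, 0) : ℝ × ℝ × ℝ × ℝ) u2 :=
      (hasDerivAt_const u2 _).prodMk ((hasDerivAt_id u2).prodMk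
        ((hasDerivAt_const u2 _).prodMk (hasDerivAt_const u2 _)))
    have hder := (hF.comp_hasDerivAt u2 hc).deriv
    rw [← hder, hGdef]
    rfl
  have hp4 : P4 L t u1 u2 u3 u4 = fderiv ℝ G p₀ (0, 0, 1, 0) := by
    have hc : HasDerivAt (fun u : ℝ => ((u1, u2, u, u4) : ℝ × ℝ × ℝ × ℝ))
        ((0, 0, 1, 0) : ℝ × ℝ × ℝ × ℝ) u3 :=
      (hasDerivAt_const u3 _).prodMk ((hasDerivAt_const u3 _).prodMk
        ((hasDerivAt_id u3).prodMk (hasDerivAt_const u3 _)))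
    have hder := (hF.comp_hasDerivAt u3 hc).deriv
    rw [← hder, hGdef]
    rfl
  have hp5 : P5 L t u1 u2 u3 u4 = fderiv ℝ G p₀ (0, 0, 0, 1) := by
    have hc : HasDerivAt (fun u : ℝ => ((u1, u2, u3, u) : ℝ × ℝ × ℝ × ℝ))
        ((0, 0, 0, 1) : ℝ × ℝ × ℝ × ℝ) u4 :=
      (hasDerivAt_const u4 _).prodMk ((hasDerivAt_const u4 _).prodMk
        ((hasDerivAt_const u4 _).prodMk (hasDerivAt_id u4)))
    have hder := (hF.comp_hasDerivAt u4 hc).deriv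
    rw [← hder, hGdef]
    rfl
  have hdecomp : ((v1, v2, v3, v4) : ℝ × ℝ × ℝ × ℝ) =
      v1 • ((1, 0, 0, 0) : ℝ × ℝ × ℝ × ℝ) + v2 • (0, 1, 0, 0) +
        v3 • (0, 0, 1, 0) + v4 • (0, 0, 0, 1) := by
    simp [Prod.ext_iff]
  have hlin : fderiv ℝ G p₀ ((v1, v2, v3, v4) : ℝ × ℝ × ℝ × ℝ) =
      P2 L t u1 u2 u3 u4 * v1 + P3 L t u1 u2 u3 u4 * v2 +
        P4 L t u1 u2 u3 u4 * v3 + P5 L t u1 u2 u3 u4 * v4 := by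
    rw [hdecomp]
    simp only [map_add, map_smul, smul_eq_mul]
    rw [hp2, hp3, hp4, hp5]
    ring
  have hmain := key v1 v2 v3 v4
  rw [hlin] at hmain
  simp only [hGdef] at hmain
  exact hmain

lemma hasDerivAt_tsum_of_uniform {q : ℝ} (hq0 : 0 < q) (hq1 : q < 1)
    {w : ℕ → ℝ → ℝ} {d : ℕ → ℝ} {r : ℝ} (hr : 0 < r)
    (hsume : ∀ e : ℝ, |e| < r → Summable (fun k => w k e))
    (hsumd : Summable d)
    (hunif : ∀ ep : ℝ, 0 < ep → ∃ δ : ℝ, 0 < δ ∧ ∀ e : ℝ, 0 < |e| → |e| < δ →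
      ∀ k, |(w k e - w k 0) / e - d k| ≤ q ^ k * ep) :
    HasDerivAt (fun e => ∑' k, w k e) (∑' k, d k) 0 := by
  have hsum0 : Summable (fun k => w k 0) := hsume 0 (by simpa using hr)
  have h1q : (0 : ℝ) < 1 - q := by linarith
  rw [hasDerivAt_iff_tendsto_slope, Metric.tendsto_nhdsWithin_nhds]
  intro ε hε
  set ep := ε * (1 - q) / 2 with hepdef
  have hep0 : 0 < ep := by positivity
  obtain ⟨δ, hδ0, hδ⟩ := hunif ep hep0
  refine ⟨min δ r, lt_min hδ0 hr, ?_⟩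
  intro e he hedist
  rw [Real.dist_eq, sub_zero] at hedist
  have he0 : e ≠ 0 := he
  have heabs : 0 < |e| := abs_pos.mpr he0
  have hed : |e| < δ := lt_of_lt_of_le hedist (min_le_left _ _)
  have her : |e| < r := lt_of_lt_of_le hedist (min_le_right _ _)
  have hse : Summable (fun k => w k e) := hsume e her
  have hterm := hδ e heabs hed
  have hsdiff : Summable (fun k => (w k e - w k 0) / e - d k) :=
    ((hse.sub hsum0).div_const e).sub hsumd
  have hslope : slope (fun e => ∑' k, w k e) 0 e - ∑' k, d k =
      ∑' k, ((w k e - w k 0) / e - d k) := by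
    rw [slope_def_field, sub_zero]
    rw [Summable.tsum_sub ((hse.sub hsum0).div_const e) hsumd, tsum_div_const,
      Summable.tsum_sub hse hsum0]
  have hsabs : Summable (fun k => |(w k e - w k 0) / e - d k|) := hsdiff.abs
  have hgeo : Summable (fun k : ℕ => q ^ k * ep) :=
    (summable_geometric_of_lt_one hq0.le hq1).mul_right ep
  have h2 : |∑' k, ((w k e - w k 0) / e - d k)| ≤
      ∑' k, |(w k e - w k 0) / e - d k| := by
    simpa [Real.norm_eq_abs] using
      norm_tsum_le_tsum_norm (f := fun k => (w k e - w k 0) / e - d k)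
        (by simpa [Real.norm_eq_abs] using hsabs)
  have h3 : ∑' k, |(w k e - w k 0) / e - d k| ≤ ∑' k : ℕ, q ^ k * ep :=
    Summable.tsum_le_tsum hterm hsabs hgeo
  have h4 : ∑' k : ℕ, q ^ k * ep = (1 - q)⁻¹ * ep := by
    rw [tsum_mul_right, tsum_geometric_of_lt_one hq0.le hq1, mul_comm]
  rw [Real.dist_eq, hslope]
  have h5 : (1 - q)⁻¹ * ep = ε / 2 := by
    rw [hepdef]
    field_simp
  calc |∑' k, ((w k e - w k 0) / e - d k)| ≤ ∑' k : ℕ, q ^ k * ep :=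
        le_trans h2 h3
    _ = ε / 2 := by rw [h4, h5]
    _ < ε := by linarith

/-- first variation formula. -/
theorem first_variation
    (q ω : ℝ) (hq : 0 < q) (hq1 : q < 1) (hω : 0 ≤ ω)
    (I : Set ℝ) (hI : I.OrdConnected) (hmem : omega0 q ω ∈ I)
    (a b : ℝ) (ha : a ∈ I) (hb : b ∈ I) (hab : a < b)
    (L : ℝ → ℝ → ℝ → ℝ → ℝ → ℝ)
    (hH1 : H1 I L) (hH2 : H2 q ω I a b L) (hH3 : H3 q ω I a b L)
    (y h : ℝ → ℝ) (hy : Y1 q ω I a b y) (hh : Y1 q ω I a b h)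
    (hcond : CondYH q ω I a b L y h) :
    HasDerivAt (fun e : ℝ => Lfun q ω I a b L (fun t => y t + e * h t))
      (jnInt q ω (fun t =>
        P2c q ω I a b L y t * h (q * t + ω) +
        P3c q ω I a b L y t * hahnD q ω I h t +
        P4c q ω I a b L y t * h a +
        P5c q ω I a b L y t * h b) a b) 0 := by
  classical
  obtain ⟨⟨hi_diff, hi_unif⟩, ⟨r, hr, hii⟩, hiiia, hiiib⟩ := hcond
  have hud : UniqueDiffWithinAt ℝ I (omega0 q ω) :=
    uniqueDiff_at_omega0 q ω hI hmem ha hb hab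
  set d : ℝ → ℝ := fun t => deriv (fun e => gvar q ω I a b L y h t e) 0 with hddef
  set F : ℝ → ℝ := fun t =>
      P2c q ω I a b L y t * h (q * t + ω) +
      P3c q ω I a b L y t * hahnD q ω I h t +
      P4c q ω I a b L y t * h a +
      P5c q ω I a b L y t * h b with hFdef
  -- chain rule: for t ∈ I, e ↦ g(t,e) has derivative F t at 0
  have hFt : ∀ t ∈ I, HasDerivAt (fun e => gvar q ω I a b L y h t e) (F t) 0 := by
    intro t ht
    exact chain_rule_aux L t (hH1 t ht) (y (q * t + ω)) (hahnD q ω I y t) (y a) (y b)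
      (h (q * t + ω)) (hahnD q ω I h t) (h a) (h b)
  have hdF : ∀ t ∈ I, d t = F t := fun t ht => (hFt t ht).deriv
  -- the curve equality
  have hLc : ∀ e t, Lc q ω I a b L (fun s => y s + e * h s) t = gvar q ω I a b L y h t e := by
    intro e t
    unfold Lc gvar
    rw [hahnD_add_mul q ω I hud y h hy.1 hh.1 e t]
  -- derivative of the partial sums at a and b
  have key : ∀ x : ℝ, x ∈ I → (∀ k : ℕ, q ^ k * x + ω * qnum q k ∈ qwInterval q ω a b) →
      (∀ e : ℝ, |e| < r → JNSummable q ω (fun t => gvar q ω I a b L y h t e) x) →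
      JNSummable q ω d x →
      HasDerivAt (fun e => ∑' k, jnTerm q ω (fun t => gvar q ω I a b L y h t e) x k)
        (∑' k, jnTerm q ω d x k) 0 := by
    intro x hxI hxorb hxsum hxsumd
    refine hasDerivAt_tsum_of_uniform hq hq1 hr
      (w := fun k e => jnTerm q ω (fun t => gvar q ω I a b L y h t e) x k)
      (d := fun k => jnTerm q ω d x k) (fun e he => hxsum e he) hxsumd ?_
    intro ep hep
    obtain ⟨δ, hδ0, H⟩ := hi_unif ep hep
    refine ⟨δ, hδ0, ?_⟩
    intro e he0 heδ k
    have hH := H e he0 heδ _ (hxorb k)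
    simp only [jnTerm]
    have hrw : (q ^ k * gvar q ω I a b L y h (q ^ k * x + ω * qnum q k) e -
          q ^ k * gvar q ω I a b L y h (q ^ k * x + ω * qnum q k) 0) / e -
          q ^ k * d (q ^ k * x + ω * qnum q k) =
        q ^ k * ((gvar q ω I a b L y h (q ^ k * x + ω * qnum q k) e -
          gvar q ω I a b L y h (q ^ k * x + ω * qnum q k) 0) / e -
          d (q ^ k * x + ω * qnum q k)) := by ring
    rw [hrw, abs_mul, abs_of_pos (pow_pos hq k)]
    exact mul_le_mul_of_nonneg_left hH.le (pow_pos hq k).le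
  have horb_a : ∀ k : ℕ, q ^ k * a + ω * qnum q k ∈ qwInterval q ω a b :=
    fun k => Or.inl (Or.inl ⟨k, rfl⟩)
  have horb_b : ∀ k : ℕ, q ^ k * b + ω * qnum q k ∈ qwInterval q ω a b :=
    fun k => Or.inr (Or.inl ⟨k, rfl⟩)
  have hkeya := key a ha horb_a (fun e he => (hii e he).1) hiiia
  have hkeyb := key b hb horb_b (fun e he => (hii e he).2) hiiib
  have hΦ := (hkeyb.const_mul (b * (1 - q) - ω)).sub (hkeya.const_mul (a * (1 - q) - ω))
  -- identify the function
  have hfun : (fun e : ℝ => Lfun q ω I a b L (fun t => y t + e * h t)) =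
      fun e : ℝ => (b * (1 - q) - ω) *
          (∑' k, jnTerm q ω (fun t => gvar q ω I a b L y h t e) b k) -
        (a * (1 - q) - ω) *
          (∑' k, jnTerm q ω (fun t => gvar q ω I a b L y h t e) a k) := by
    funext e
    unfold Lfun jnInt jnInt0
    have h1 : ∀ x : ℝ, (∑' k, jnTerm q ω (Lc q ω I a b L (fun t => y t + e * h t)) x k) =
        ∑' k, jnTerm q ω (fun t => gvar q ω I a b L y h t e) x k := by
      intro x
      refine tsum_congr fun k => ?_
      simp only [jnTerm]
      rw [hLc e]
    rw [h1 a, h1 b]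
  -- identify the derivative value
  have hval : jnInt q ω F a b =
      (b * (1 - q) - ω) * (∑' k, jnTerm q ω d b k) -
        (a * (1 - q) - ω) * (∑' k, jnTerm q ω d a k) := by
    unfold jnInt jnInt0
    have h1 : ∀ x : ℝ, x ∈ I → (∑' k, jnTerm q ω F x k) = ∑' k, jnTerm q ω d x k := by
      intro x hx
      refine tsum_congr fun k => ?_
      simp only [jnTerm]
      rw [hdF _ (orbit_mem_I q ω hq hq1 hI hmem hx k)]
    rw [h1 a ha, h1 b hb]
  rw [show (jnInt q ω (fun t =>
        P2c q ω I a b L y t * h (q * t + ω) +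
        P3c q ω I a b L y t * hahnD q ω I h t +
        P4c q ω I a b L y t * h a +
        P5c q ω I a b L y t * h b) a b) = jnInt q ω F a b from rfl, hval, hfun]
  exact hΦ


end Hahn
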